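/- arXiv:1210.5565 — 2 statements merged into one kernel-verified Lean document; each statement's English description precedes it below -/
import Mathlib

section
/- Let I be an interval of the real line and let ν_0, ν_1, …, ν_n be finite nonatomic Borel measures on I that are pairwise mutually singular. Then for every δ > 0 there exists a decomposition of I into pairwise disjoint subsets P_0, P_1, …, P_n with P_0 ∪ ⋯ ∪ P_n = I, such that each P_j is a finite union of intervals (not necessarily open or closed) and ν_j(I) − ν_j(P_j) < δ for every j ∈ {0,…,n}. -/
open MeasureTheory

open MeasureTheory Set

open MeasureTheory Set

/-- `S` is a finite union of convex subsets of `ℝ`. -/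
def FU (S : Set ℝ) : Prop :=
  ∃ 𝒥 : Finset (Set ℝ), (∀ J ∈ 𝒥, Convex ℝ J) ∧ S = ⋃₀ ↑𝒥

theorem FU.of_convex {S : Set ℝ} (h : Convex ℝ S) : FU S :=
  ⟨{S}, by simp [h], by simp⟩

theorem FU.empty : FU (∅ : Set ℝ) := ⟨∅, by simp, by simp⟩

theorem FU.union {S T : Set ℝ} (hS : FU S) (hT : FU T) : FU (S ∪ T) := by
  classical
  obtain ⟨𝒥, h𝒥, rfl⟩ := hS
  obtain ⟨𝒦, h𝒦, rfl⟩ := hT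
  refine ⟨𝒥 ∪ 𝒦, ?_, by simp [Set.sUnion_union]⟩
  intro J hJ
  rcases Finset.mem_union.1 hJ with h | h
  · exact h𝒥 J h
  · exact h𝒦 J h

theorem FU.inter {S T : Set ℝ} (hS : FU S) (hT : FU T) : FU (S ∩ T) := by
  classical
  obtain ⟨𝒥, h𝒥, rfl⟩ := hS
  obtain ⟨𝒦, h𝒦, rfl⟩ := hT
  refine ⟨(𝒥 ×ˢ 𝒦).image fun p => p.1 ∩ p.2, ?_, ?_⟩
  · intro J hJ
    simp only [Finset.mem_image, Finset.mem_product] at hJ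
    obtain ⟨⟨A, B⟩, ⟨hA, hB⟩, rfl⟩ := hJ
    exact (h𝒥 A hA).inter (h𝒦 B hB)
  · ext x
    simp only [Set.mem_inter_iff, Set.mem_sUnion, Finset.coe_image, Set.mem_image,
      Finset.mem_coe, Finset.mem_product]
    constructor
    · rintro ⟨⟨A, hA, hxA⟩, ⟨B, hB, hxB⟩⟩
      exact ⟨A ∩ B, ⟨⟨A, B⟩, ⟨hA, hB⟩, rfl⟩, hxA, hxB⟩
    · rintro ⟨J, ⟨⟨A, B⟩, ⟨hA, hB⟩, rfl⟩, hxA, hxB⟩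
      exact ⟨⟨A, hA, hxA⟩, ⟨B, hB, hxB⟩⟩

theorem FU.biUnion {ι : Type*} (t : Finset ι) (f : ι → Set ℝ) (hf : ∀ i ∈ t, FU (f i)) :
    FU (⋃ i ∈ t, f i) := by
  classical
  induction t using Finset.induction with
  | empty => simpa using FU.empty
  | @insert a s ha ih =>
    rw [Finset.set_biUnion_insert]
    exact (hf a (Finset.mem_insert_self a s)).union
      (ih fun i hi => hf i (Finset.mem_insert_of_mem hi))

theorem FU.biInter {ι : Type*} (t : Finset ι) (f : ι → Set ℝ) (hf : ∀ i ∈ t, FU (f i)) :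
    FU (⋂ i ∈ t, f i) := by
  classical
  induction t using Finset.induction with
  | empty => simpa using FU.of_convex convex_univ
  | @insert a s ha ih =>
    rw [Finset.set_biInter_insert]
    exact (hf a (Finset.mem_insert_self a s)).inter
      (ih fun i hi => hf i (Finset.mem_insert_of_mem hi))

theorem FU.compl_ball (x r : ℝ) : FU (Metric.ball x r)ᶜ := by
  have : (Metric.ball x r)ᶜ = Set.Iic (x - r) ∪ Set.Ici (x + r) := by
    rw [Real.ball_eq_Ioo]
    ext y
    simp only [Set.mem_compl_iff, Set.mem_Ioo, Set.mem_union, Set.mem_Iic, Set.mem_Ici]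
    constructor
    · intro h
      by_contra hc
      push_neg at hc
      exact h ⟨hc.1, hc.2⟩
    · rintro (h | h) ⟨h1, h2⟩ <;> linarith
  rw [this]
  exact (FU.of_convex (convex_Iic _)).union (FU.of_convex (convex_Ici _))

open MeasureTheory Set

theorem exists_thickening_pairwise_disjoint {m : ℕ} (K : Fin (m + 1) → Set ℝ)
    (hKc : ∀ j, IsCompact (K j)) (hKd : Pairwise fun j k => Disjoint (K j) (K k)) :
    ∃ ε : ℝ, 0 < ε ∧ Pairwise fun j k =>
      Disjoint (Metric.thickening ε (K j)) (Metric.thickening ε (K k)) := by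
  classical
  have hex : ∀ p : Fin (m + 1) × Fin (m + 1), ∃ d : ℝ, 0 < d ∧
      (p.1 ≠ p.2 → Disjoint (Metric.thickening d (K p.1)) (Metric.thickening d (K p.2))) := by
    rintro ⟨j, k⟩
    by_cases h : j = k
    · exact ⟨1, one_pos, fun hne => absurd h hne⟩
    · obtain ⟨d, hd, hdd⟩ := (hKd h).exists_thickenings (hKc j) (hKc k).isClosed
      exact ⟨d, hd, fun _ => hdd⟩
  choose f hf1 hf2 using hex
  refine ⟨Finset.univ.inf' Finset.univ_nonempty f, ?_, ?_⟩
  · rw [Finset.lt_inf'_iff]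
    exact fun p _ => hf1 p
  · intro j k hjk
    have hle : Finset.univ.inf' Finset.univ_nonempty f ≤ f (j, k) :=
      Finset.inf'_le _ (Finset.mem_univ _)
    exact (hf2 (j, k) hjk).mono (Metric.thickening_mono hle _) (Metric.thickening_mono hle _)


theorem key_compacts (n : ℕ) (ν : Fin (n + 1) → Measure ℝ)
    (hfin : ∀ j, IsFiniteMeasure (ν j))
    (hsing : Pairwise fun j k => (ν j).MutuallySingular (ν k))
    (δ : ℝ) (hδ : 0 < δ) :
    ∃ K : Fin (n + 1) → Set ℝ,
      (∀ j, IsCompact (K j)) ∧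
      (Pairwise fun j k => Disjoint (K j) (K k)) ∧
      (∀ j, ν j Set.univ < ν j (K j) + ENNReal.ofReal δ) := by
  classical
  haveI := hfin
  set s : Fin (n + 1) → Fin (n + 1) → Set ℝ := fun j k =>
    if h : j ≠ k then (hsing h).nullSet else ∅ with hs_def
  have hs_meas : ∀ j k, MeasurableSet (s j k) := by
    intro j k
    by_cases h : j ≠ k
    · simpa [hs_def, h] using (hsing h).measurableSet_nullSet
    · rw [not_not] at h
      subst h
      simp [hs_def]
  have hs_null : ∀ j k, ν j (s j k) = 0 := by
    intro j k
    by_cases h : j ≠ k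
    · simpa [hs_def, h] using (hsing h).measure_nullSet
    · rw [not_not] at h
      subst h
      simp [hs_def]
  have hs_compl_null : ∀ j k, j ≠ k → ν k (s j k)ᶜ = 0 := by
    intro j k h
    simpa [hs_def, h] using (hsing h).measure_compl_nullSet
  set B : Fin (n + 1) → Set ℝ := fun j => ⋂ k, (s j k)ᶜ with hB_def
  have hB_meas : ∀ j, MeasurableSet (B j) :=
    fun j => MeasurableSet.iInter fun k => (hs_meas j k).compl
  have hB_compl_null : ∀ j, ν j (B j)ᶜ = 0 := by
    intro j
    rw [hB_def]
    simp only [Set.compl_iInter, compl_compl]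
    exact measure_iUnion_null fun k => hs_null j k
  have hB_other : ∀ j k, j ≠ k → ν k (B j) = 0 := by
    intro j k h
    exact measure_mono_null (Set.iInter_subset _ k) (hs_compl_null j k h)
  set A : Fin (n + 1) → Set ℝ := fun j => B j \ ⋃ k, ⋃ (_ : k < j), B k with hA_def
  have hA_meas : ∀ j, MeasurableSet (A j) :=
    fun j => (hB_meas j).diff (MeasurableSet.iUnion fun k =>
      MeasurableSet.iUnion fun _ => hB_meas k)
  have hAdisj : Pairwise fun j k => Disjoint (A j) (A k) := by
    have key : ∀ j k : Fin (n + 1), j < k → Disjoint (A j) (A k) := by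
      intro j k hjk
      refine Set.disjoint_left.2 fun x hxj hxk => ?_
      exact hxk.2 (Set.mem_iUnion.2 ⟨j, Set.mem_iUnion.2 ⟨hjk, hxj.1⟩⟩)
    intro j k hjk
    rcases hjk.lt_or_gt with h | h
    · exact key j k h
    · exact (key k j h).symm
  have hA_full : ∀ j, ν j Set.univ = ν j (A j) := by
    intro j
    have h1 : ν j (A j)ᶜ = 0 := by
      have hU : ν j (⋃ k, ⋃ (_ : k < j), B k) = 0 :=
        measure_iUnion_null fun k => measure_iUnion_null fun hk => hB_other k j hk.ne
      have hsub : (A j)ᶜ ⊆ (B j)ᶜ ∪ ⋃ k, ⋃ (_ : k < j), B k := by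
        intro x hx
        by_cases hxB : x ∈ B j
        · right
          by_contra hxU
          exact hx ⟨hxB, hxU⟩
        · left
          exact hxB
      exact measure_mono_null hsub (measure_union_null (hB_compl_null j) hU)
    have := measure_add_measure_compl (μ := ν j) (hA_meas j)
    rw [h1, add_zero] at this
    exact this.symm
  have hK : ∀ j, ∃ K, K ⊆ A j ∧ IsCompact K ∧ ν j (A j) < ν j K + ENNReal.ofReal δ :=
    fun j => (hA_meas j).exists_isCompact_lt_add (measure_ne_top _ _)
      (by simp [ENNReal.ofReal_eq_zero, not_le, hδ])
  choose K hK1 hK2 hK3 using hK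
  refine ⟨K, hK2, ?_, ?_⟩
  · intro j k hjk
    exact (hAdisj hjk).mono (hK1 j) (hK1 k)
  · intro j
    rw [hA_full j] at *
    exact hK3 j

/-- Lemma 4.12 of the paper: finitely many mutually-singular nonatomic finite
Borel measures on an interval `I ⊆ ℝ` can be almost separated by a
decomposition of `I` into finitely many pieces, each a finite union of
intervals. -/
theorem stmt_2 (I : Set ℝ) (hI : Convex ℝ I) (n : ℕ)
    (ν : Fin (n + 1) → Measure ℝ)
    (hfin : ∀ j, IsFiniteMeasure (ν j))
    (hsupp : ∀ j, ν j Iᶜ = 0)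
    (hna : ∀ j (x : ℝ), ν j {x} = 0)
    (hsing : Pairwise fun j k => (ν j).MutuallySingular (ν k))
    (δ : ℝ) (hδ : 0 < δ) :
    ∃ P : Fin (n + 1) → Set ℝ,
      (Pairwise fun j k => Disjoint (P j) (P k)) ∧
      (⋃ j, P j) = I ∧
      (∀ j, ∃ 𝒥 : Finset (Set ℝ), (∀ J ∈ 𝒥, Convex ℝ J) ∧ P j = ⋃₀ ↑𝒥) ∧
      (∀ j, (ν j I).toReal - (ν j (P j)).toReal < δ) := by
  classical
  haveI := hfin
  -- Step 1: disjoint compact sets carrying almost all of each measure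
  obtain ⟨K, hKc, hKd, hKm⟩ := key_compacts n ν hfin hsing δ hδ
  -- Step 2: a common thickening radius keeping them disjoint
  obtain ⟨ε, hε, hεd⟩ := exists_thickening_pairwise_disjoint K hKc hKd
  -- Step 3: finite covers by balls
  have hcov : ∀ j, ∃ t : Finset ℝ, ↑t ⊆ K j ∧ K j ⊆ ⋃ x ∈ t, Metric.ball x ε := by
    intro j
    obtain ⟨t, hts, htf, htc⟩ := (hKc j).finite_cover_balls hε
    refine ⟨htf.toFinset, by simpa using hts, by simpa using htc⟩
  choose T hT1 hT2 using hcov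
  set V : Fin (n + 1) → Set ℝ := fun j => ⋃ x ∈ T j, Metric.ball x ε with hV_def
  have hKV : ∀ j, K j ⊆ V j := hT2
  have hVthick : ∀ j, V j ⊆ Metric.thickening ε (K j) := by
    intro j
    refine Set.iUnion₂_subset fun x hx => ?_
    exact Metric.ball_subset_thickening (hT1 j hx) ε
  have hVd : Pairwise fun j k => Disjoint (V j) (V k) :=
    fun j k hjk => (hεd hjk).mono (hVthick j) (hVthick k)
  -- Step 4: the partition
  set W : Set ℝ := ⋃ k ∈ Finset.univ.filter (fun k : Fin (n + 1) => k ≠ 0), V k with hW_def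
  set P : Fin (n + 1) → Set ℝ := fun j => if j = 0 then I \ W else I ∩ V j with hP_def
  have hPI : ∀ j, P j ⊆ I := by
    intro j
    by_cases h : j = 0 <;> simp [hP_def, h, Set.diff_subset, Set.inter_subset_left]
  have hWmem : ∀ {x : ℝ} {k : Fin (n + 1)}, k ≠ 0 → x ∈ V k → x ∈ W := by
    intro x k hk hx
    exact Set.mem_iUnion₂.2 ⟨k, by simp [hk], hx⟩
  have hPd : Pairwise fun j k => Disjoint (P j) (P k) := by
    have key : ∀ j k : Fin (n + 1), j ≠ k → j = 0 → Disjoint (P j) (P k) := by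
      intro j k hjk hj
      subst hj
      refine Set.disjoint_left.2 fun x hxj hxk => ?_
      rw [hP_def] at hxj hxk
      simp only [if_pos rfl, if_neg (Ne.symm hjk)] at hxj hxk
      exact hxj.2 (hWmem (Ne.symm hjk) hxk.2)
    intro j k hjk
    by_cases hj : j = 0
    · exact key j k hjk hj
    · by_cases hk : k = 0
      · exact (key k j (Ne.symm hjk) hk).symm
      · refine Set.disjoint_left.2 fun x hxj hxk => ?_
        rw [hP_def] at hxj hxk
        simp only [if_neg hj, if_neg hk] at hxj hxk
        exact Set.disjoint_left.1 (hVd hjk) hxj.2 hxk.2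
  have hPunion : (⋃ j, P j) = I := by
    apply Set.Subset.antisymm (Set.iUnion_subset hPI)
    intro x hx
    by_cases hxW : x ∈ W
    · rw [hW_def] at hxW
      obtain ⟨k, hk, hxk⟩ := Set.mem_iUnion₂.1 hxW
      have hk0 : k ≠ 0 := by simpa using hk
      exact Set.mem_iUnion.2 ⟨k, by simp [hP_def, if_neg hk0, hx, hxk]⟩
    · exact Set.mem_iUnion.2 ⟨0, by simp [hP_def, hx, hxW]⟩
  refine ⟨P, hPd, hPunion, ?_, ?_⟩
  · -- finite unions of intervals
    intro j
    by_cases hj : j = 0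
    · subst hj
      have hVc : ∀ k, (V k)ᶜ = ⋂ x ∈ T k, (Metric.ball x ε)ᶜ :=
        fun k => Set.compl_iUnion₂ _
      have hP0 : P 0 = I \ W := by
        show (if (0 : Fin (n + 1)) = 0 then I \ W else I ∩ V 0) = I \ W
        rw [if_pos rfl]
      have : P 0 = I ∩ ⋂ k ∈ Finset.univ.filter (fun k : Fin (n + 1) => k ≠ 0),
          ⋂ x ∈ T k, (Metric.ball x ε)ᶜ := by
        rw [hP0, Set.diff_eq, hW_def, Set.compl_iUnion₂]
        congr 1
        exact Set.iInter₂_congr fun k hk => hVc k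
      rw [this]
      exact (FU.of_convex hI).inter
        (FU.biInter _ _ fun k _ => FU.biInter _ _ fun x _ => FU.compl_ball x ε)
    · have : P j = I ∩ ⋃ x ∈ T j, Metric.ball x ε := by
        rw [hP_def]
        simp [if_neg hj, hV_def]
      rw [this]
      exact (FU.of_convex hI).inter
        (FU.biUnion _ _ fun x _ => FU.of_convex (convex_ball x ε))
  · -- measure estimate
    intro j
    have hVP : ν j (K j) ≤ ν j (P j) := by
      have h1 : ν j (V j) ≤ ν j (V j ∩ I) := by
        have hle : ν j (V j) ≤ ν j (V j ∩ I) + ν j (V j \ I) := by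
          refine le_trans (measure_mono ?_) (measure_union_le _ _)
          intro x hx
          by_cases hxI : x ∈ I
          · exact Or.inl ⟨hx, hxI⟩
          · exact Or.inr ⟨hx, hxI⟩
        have h2 : ν j (V j \ I) = 0 :=
          measure_mono_null (fun x hx => hx.2) (hsupp j)
        rwa [h2, add_zero] at hle
      have h3 : V j ∩ I ⊆ P j := by
        by_cases hj : j = 0
        · subst hj
          rintro x ⟨hxV, hxI⟩
          rw [hP_def]
          simp only [if_pos rfl]
          refine ⟨hxI, fun hxW => ?_⟩
          rw [hW_def] at hxW
          obtain ⟨k, hk, hxk⟩ := Set.mem_iUnion₂.1 hxW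
          have hk0 : k ≠ 0 := by simpa using hk
          exact Set.disjoint_left.1 (hVd (Ne.symm hk0)) hxV hxk
        · rintro x ⟨hxV, hxI⟩
          rw [hP_def]
          simp only [if_neg hj]
          exact ⟨hxI, hxV⟩
      calc ν j (K j) ≤ ν j (V j) := measure_mono (hKV j)
        _ ≤ ν j (V j ∩ I) := h1
        _ ≤ ν j (P j) := measure_mono h3
    have hchain : ν j I < ν j (P j) + ENNReal.ofReal δ :=
      lt_of_le_of_lt (measure_mono (Set.subset_univ I))
        (lt_of_lt_of_le (hKm j) (add_le_add_left hVP _))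
    have hfinP : ν j (P j) + ENNReal.ofReal δ ≠ ⊤ := by
      exact ENNReal.add_ne_top.2 ⟨measure_ne_top _ _, ENNReal.ofReal_ne_top⟩
    have := (ENNReal.toReal_lt_toReal (measure_ne_top _ _) hfinP).2 hchain
    rw [ENNReal.toReal_add (measure_ne_top _ _) ENNReal.ofReal_ne_top,
      ENNReal.toReal_ofReal hδ.le] at this
    linarith
end

section
/- Let (X,d) be a metric space and let f : X → ℝ be 1-Lipschitz. Let T₁ and T₂ be two intervals of ℝ with nonempty intersection, and let γ₁ : T₁ → X and γ₂ : T₂ → X be optimal paths for f that agree on T₁ ∩ T₂. Then the path γ : T₁ ∪ T₂ → X defined by γ(t) := γ₁(t) if t ∈ T₁ and γ(t) := γ₂(t) if t ∈ T₂ is an optimal path for f; in particular, γ is a geodesic, i.e., d(γ(t₁),γ(t₂)) = |t₂ − t₁| for all t₁, t₂ ∈ T₁ ∪ T₂. -/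
open Classical

private lemma splice_aux {X : Type*} [MetricSpace X] (f : X → ℝ)
    (hf : ∀ x y : X, f x - f y ≤ dist x y)
    (T₁ T₂ : Set ℝ) (hT₁ : Convex ℝ T₁) (hT₂ : Convex ℝ T₂)
    (γ₁ γ₂ : ℝ → X)
    (hgeo₁ : ∀ s ∈ T₁, ∀ t ∈ T₁, dist (γ₁ s) (γ₁ t) = |s - t|)
    (hopt₁ : ∀ s ∈ T₁, ∀ t ∈ T₁, s < t → f (γ₁ s) = dist (γ₁ s) (γ₁ t) + f (γ₁ t))
    (hgeo₂ : ∀ s ∈ T₂, ∀ t ∈ T₂, dist (γ₂ s) (γ₂ t) = |s - t|)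
    (hopt₂ : ∀ s ∈ T₂, ∀ t ∈ T₂, s < t → f (γ₂ s) = dist (γ₂ s) (γ₂ t) + f (γ₂ t))
    (r : ℝ) (hr₁ : r ∈ T₁) (hr₂ : r ∈ T₂) (hr : γ₁ r = γ₂ r)
    (s t : ℝ) (hs₁ : s ∈ T₁) (hs₂ : s ∉ T₂) (ht₂ : t ∈ T₂) (ht₁ : t ∉ T₁)
    (hst : s < t) :
    dist (γ₁ s) (γ₂ t) = t - s ∧ f (γ₁ s) = dist (γ₁ s) (γ₂ t) + f (γ₂ t) := by
  have hsr : s < r := by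
    by_contra h
    push_neg at h
    exact hs₂ (hT₂.ordConnected.out hr₂ ht₂ ⟨h, hst.le⟩)
  have hrt : r < t := by
    by_contra h
    push_neg at h
    exact ht₁ (hT₁.ordConnected.out hs₁ hr₁ ⟨hst.le, h⟩)
  have d1 : dist (γ₁ s) (γ₁ r) = r - s := by
    rw [hgeo₁ s hs₁ r hr₁, abs_of_nonpos (by linarith), neg_sub]
  have d2 : dist (γ₂ r) (γ₂ t) = t - r := by
    rw [hgeo₂ r hr₂ t ht₂, abs_of_nonpos (by linarith), neg_sub]
  have f1 : f (γ₁ s) = (r - s) + f (γ₁ r) := by rw [← d1]; exact hopt₁ s hs₁ r hr₁ hsr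
  have f2 : f (γ₂ r) = (t - r) + f (γ₂ t) := by rw [← d2]; exact hopt₂ r hr₂ t ht₂ hrt
  have hle : dist (γ₁ s) (γ₂ t) ≤ t - s := by
    calc dist (γ₁ s) (γ₂ t) ≤ dist (γ₁ s) (γ₁ r) + dist (γ₂ r) (γ₂ t) := by
          rw [hr] at d1 ⊢; exact dist_triangle _ _ _
      _ = t - s := by rw [d1, d2]; ring
  have hge : t - s ≤ dist (γ₁ s) (γ₂ t) := by
    have := hf (γ₁ s) (γ₂ t)
    rw [f1, hr, f2] at this
    linarith
  have hd : dist (γ₁ s) (γ₂ t) = t - s := le_antisymm hle hge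
  exact ⟨hd, by rw [hd, f1, hr, f2]; ring⟩

/-- Lemma 7.5 of the paper: two optimal paths for a `1`-Lipschitz function
which agree on the (nonempty) intersection of their interval domains splice
together to an optimal path; in particular the spliced path is geodesic. -/
theorem stmt_5 {X : Type*} [MetricSpace X] (f : X → ℝ)
    (hf : ∀ x y : X, f x - f y ≤ dist x y)
    (T₁ T₂ : Set ℝ) (hT₁ : Convex ℝ T₁) (hT₂ : Convex ℝ T₂)
    (hne : (T₁ ∩ T₂).Nonempty)
    (γ₁ γ₂ : ℝ → X)
    (hgeo₁ : ∀ s ∈ T₁, ∀ t ∈ T₁, dist (γ₁ s) (γ₁ t) = |s - t|)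
    (hopt₁ : ∀ s ∈ T₁, ∀ t ∈ T₁, s < t → f (γ₁ s) = dist (γ₁ s) (γ₁ t) + f (γ₁ t))
    (hgeo₂ : ∀ s ∈ T₂, ∀ t ∈ T₂, dist (γ₂ s) (γ₂ t) = |s - t|)
    (hopt₂ : ∀ s ∈ T₂, ∀ t ∈ T₂, s < t → f (γ₂ s) = dist (γ₂ s) (γ₂ t) + f (γ₂ t))
    (hagree : ∀ t ∈ T₁ ∩ T₂, γ₁ t = γ₂ t)
    (γ : ℝ → X) (hγ : ∀ t, γ t = if t ∈ T₁ then γ₁ t else γ₂ t) :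
    (∀ s ∈ T₁ ∪ T₂, ∀ t ∈ T₁ ∪ T₂, dist (γ s) (γ t) = |s - t|) ∧
    (∀ s ∈ T₁ ∪ T₂, ∀ t ∈ T₁ ∪ T₂, s < t →
      f (γ s) = dist (γ s) (γ t) + f (γ t)) := by
  obtain ⟨r, hr₁, hr₂⟩ := hne
  have hr : γ₁ r = γ₂ r := hagree r ⟨hr₁, hr₂⟩
  have hγ1 : ∀ t ∈ T₁, γ t = γ₁ t := by intro t ht; rw [hγ]; simp [ht]
  have hγ2 : ∀ t ∈ T₂, γ t = γ₂ t := by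
    intro t ht; rw [hγ]
    split
    · exact hagree t ⟨‹_›, ht⟩
    · rfl
  have key : ∀ s ∈ T₁ ∪ T₂, ∀ t ∈ T₁ ∪ T₂, s < t →
      dist (γ s) (γ t) = t - s ∧ f (γ s) = dist (γ s) (γ t) + f (γ t) := by
    intro s hs t ht hst
    by_cases hs₁ : s ∈ T₁ <;> by_cases ht₁ : t ∈ T₁
    · rw [hγ1 s hs₁, hγ1 t ht₁]
      refine ⟨?_, hopt₁ s hs₁ t ht₁ hst⟩
      rw [hgeo₁ s hs₁ t ht₁, abs_of_nonpos (by linarith), neg_sub]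
    · have ht₂ : t ∈ T₂ := ht.resolve_left ht₁
      by_cases hs₂ : s ∈ T₂
      · rw [hγ2 s hs₂, hγ2 t ht₂]
        refine ⟨?_, hopt₂ s hs₂ t ht₂ hst⟩
        rw [hgeo₂ s hs₂ t ht₂, abs_of_nonpos (by linarith), neg_sub]
      · rw [hγ1 s hs₁, hγ2 t ht₂]
        exact splice_aux f hf T₁ T₂ hT₁ hT₂ γ₁ γ₂ hgeo₁ hopt₁ hgeo₂ hopt₂
          r hr₁ hr₂ hr s t hs₁ hs₂ ht₂ ht₁ hst
    · have hs₂ : s ∈ T₂ := hs.resolve_left hs₁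
      by_cases ht₂ : t ∈ T₂
      · rw [hγ2 s hs₂, hγ2 t ht₂]
        refine ⟨?_, hopt₂ s hs₂ t ht₂ hst⟩
        rw [hgeo₂ s hs₂ t ht₂, abs_of_nonpos (by linarith), neg_sub]
      · rw [hγ2 s hs₂, hγ1 t ht₁]
        exact splice_aux f hf T₂ T₁ hT₂ hT₁ γ₂ γ₁ hgeo₂ hopt₂ hgeo₁ hopt₁
          r hr₂ hr₁ hr.symm s t hs₂ hs₁ ht₁ ht₂ hst
    · have hs₂ : s ∈ T₂ := hs.resolve_left hs₁
      have ht₂ : t ∈ T₂ := ht.resolve_left ht₁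
      rw [hγ2 s hs₂, hγ2 t ht₂]
      refine ⟨?_, hopt₂ s hs₂ t ht₂ hst⟩
      rw [hgeo₂ s hs₂ t ht₂, abs_of_nonpos (by linarith), neg_sub]
  constructor
  · intro s hs t ht
    rcases lt_trichotomy s t with h | h | h
    · rw [(key s hs t ht h).1, abs_of_nonpos (by linarith), neg_sub]
    · simp [h]
    · rw [dist_comm, (key t ht s hs h).1, abs_of_nonneg (by linarith)]
  · intro s hs t ht hst
    exact (key s hs t ht hst).2
end
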